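/- For the 1-random coordinate descent method with uniform selection applied to a smooth function f (h = 0) whose block gradients are Lipschitz with constants L_i, the expected gradient norms satisfy min_{0 ≤ l ≤ k} E[(‖∇f(x^l)‖*_L)²] ≤ 2N (f(x⁰) − f*) / (k + 1), where ‖y‖*_L = (Σ_i L_i^{-1} ‖y_i‖²)^{1/2} and f* = inf f. -/

import Mathlib

open scoped BigOperators RealInnerProductSpace
open Finset Filter

noncomputable section

/-- The ambient space `ℝ^n` with the Euclidean norm. -/
abbrev En (n : ℕ) := EuclideanSpace ℝ (Fin n)

/-- Projection onto block `i` of the block decomposition of `ℝ^n` given by the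
block-index map `blk : Fin n → Fin N`; it realizes `U_i U_iᵀ y`. -/
def blockProj {n N : ℕ} (blk : Fin n → Fin N) (i : Fin N) (y : En n) : En n :=
  WithLp.toLp 2 (fun j => if blk j = i then y j else 0)

/-- The squared block norm `‖x‖_L² = ∑ i, L i ‖x_i‖²`. -/
def blockNormSq {n N : ℕ} (blk : Fin n → Fin N) (L : Fin N → ℝ) (x : En n) : ℝ :=
  ∑ i, L i * ‖blockProj blk i x‖ ^ 2

-- inner with a block-supported vector sees only the block
lemma inner_blockProj {n N : ℕ} (blk : Fin n → Fin N) (i : Fin N) (y s : En n)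
    (hs : ∀ j, blk j ≠ i → s j = 0) :
    ⟪blockProj blk i y, s⟫ = ⟪y, s⟫ := by
  simp only [PiLp.inner_apply, RCLike.inner_apply, conj_trivial, blockProj]
  refine Finset.sum_congr rfl fun j _ => ?_
  by_cases h : blk j = i
  · simp [h]
  · simp [h, hs j h]

lemma inner_self_blockProj {n N : ℕ} (blk : Fin n → Fin N) (i : Fin N) (y : En n) :
    ⟪y, blockProj blk i y⟫ = ‖blockProj blk i y‖ ^ 2 := by
  rw [← inner_blockProj blk i y (blockProj blk i y) (fun j hj => by simp [blockProj, hj]),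
    real_inner_self_eq_norm_sq]

lemma descent {n N : ℕ} (blk : Fin n → Fin N) {L : Fin N → ℝ} (hL : ∀ i, 0 < L i)
    {f : En n → ℝ} {g : En n → En n} (hg : ∀ x, HasGradientAt f (g x) x)
    (hlip : ∀ (i : Fin N) (x s : En n), (∀ j, blk j ≠ i → s j = 0) →
      ‖blockProj blk i (g (x + s)) - blockProj blk i (g x)‖ ≤ L i * ‖s‖)
    (i : Fin N) (x : En n) :
    f (x - (L i)⁻¹ • blockProj blk i (g x)) ≤
      f x - (2 * L i)⁻¹ * ‖blockProj blk i (g x)‖ ^ 2 := by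
  set p := blockProj blk i (g x) with hp
  set s : En n := -((L i)⁻¹ • p) with hs
  have hLi := hL i
  have hsupp : ∀ j, blk j ≠ i → s j = 0 := by
    intro j hj
    simp [hs, hp, blockProj, hj]
  have hsupp' : ∀ t : ℝ, ∀ j, blk j ≠ i → (t • s) j = 0 := by
    intro t j hj
    simp [hsupp j hj]
  have hline : ∀ t₀ : ℝ, HasDerivAt (fun t : ℝ => x + t • s) s t₀ := by
    intro t₀
    simpa using ((hasDerivAt_id t₀).smul_const s).const_add x
  have hcomp : ∀ t₀ : ℝ, HasDerivAt (fun t => f (x + t • s)) ⟪g (x + t₀ • s), s⟫ t₀ := by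
    intro t₀
    have := (hg (x + t₀ • s)).hasFDerivAt.comp_hasDerivAt t₀ (hline t₀)
    simp [InnerProductSpace.toDual_apply_apply] at this
    exact this
  set ψ : ℝ → ℝ := fun t => f (x + t • s) - t * ⟪g x, s⟫ - L i * t ^ 2 / 2 * ‖s‖ ^ 2 with hψdef
  have hψ : ∀ t : ℝ, HasDerivAt ψ
      (⟪g (x + t • s), s⟫ - ⟪g x, s⟫ - L i * t * ‖s‖ ^ 2) t := by
    intro t
    have h1 := hcomp t
    have h2 : HasDerivAt (fun t : ℝ => t * ⟪g x, s⟫) ⟪g x, s⟫ t := by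
      simpa using (hasDerivAt_id t).mul_const ⟪g x, s⟫
    have h3 : HasDerivAt (fun t : ℝ => L i * t ^ 2 / 2 * ‖s‖ ^ 2) (L i * t * ‖s‖ ^ 2) t := by
      have hpow : HasDerivAt (fun t : ℝ => t ^ 2) (2 * t) t := by
        simpa using hasDerivAt_pow 2 t
      have := ((hpow.const_mul (L i)).div_const 2).mul_const (‖s‖ ^ 2)
      rw [show L i * t * ‖s‖ ^ 2 = L i * (2 * t) / 2 * ‖s‖ ^ 2 by ring]
      exact this
    exact (h1.sub h2).sub h3
  have hkey : ∀ t ∈ Set.Icc (0:ℝ) 1,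
      ⟪g (x + t • s), s⟫ - ⟪g x, s⟫ - L i * t * ‖s‖ ^ 2 ≤ 0 := by
    intro t ht
    have hinner : ⟪g (x + t • s), s⟫ - ⟪g x, s⟫
        = ⟪blockProj blk i (g (x + t • s)) - blockProj blk i (g x), s⟫ := by
      rw [inner_sub_left, inner_blockProj blk i _ s hsupp, inner_blockProj blk i _ s hsupp]
    have hb : ⟪blockProj blk i (g (x + t • s)) - blockProj blk i (g x), s⟫
        ≤ (L i * ‖t • s‖) * ‖s‖ := by
      calc ⟪blockProj blk i (g (x + t • s)) - blockProj blk i (g x), s⟫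
          ≤ ‖blockProj blk i (g (x + t • s)) - blockProj blk i (g x)‖ * ‖s‖ :=
            real_inner_le_norm _ _
        _ ≤ (L i * ‖t • s‖) * ‖s‖ := by
            gcongr
            exact hlip i x (t • s) (hsupp' t)
    have : ‖t • s‖ = t * ‖s‖ := by
      rw [norm_smul, Real.norm_eq_abs, abs_of_nonneg ht.1]
    rw [hinner]
    rw [this] at hb
    nlinarith [hb]
  have hanti : AntitoneOn ψ (Set.Icc (0:ℝ) 1) := by
    apply antitoneOn_of_deriv_nonpos (convex_Icc 0 1)
    · exact fun t _ => ((hψ t).differentiableAt).continuousAt.continuousWithinAt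
    · exact fun t _ => ((hψ t).differentiableAt).differentiableWithinAt
    · intro t ht
      rw [(hψ t).deriv]
      exact hkey t (interior_subset ht)
  have h01 : ψ 1 ≤ ψ 0 := hanti (by norm_num) (by norm_num) (by norm_num)
  have hψ1 : ψ 1 = f (x + s) - ⟪g x, s⟫ - L i / 2 * ‖s‖ ^ 2 := by
    simp [hψdef]
  have hψ0 : ψ 0 = f x := by simp [hψdef]
  have hgs : ⟪g x, s⟫ = -((L i)⁻¹ * ‖p‖ ^ 2) := by
    rw [hs, inner_neg_right, real_inner_smul_right, hp, inner_self_blockProj]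
  have hns : ‖s‖ ^ 2 = (L i)⁻¹ ^ 2 * ‖p‖ ^ 2 := by
    rw [hs, norm_neg, norm_smul, Real.norm_eq_abs, abs_of_nonneg (by positivity)]
    ring
  have hxs : x + s = x - (L i)⁻¹ • p := by
    rw [hs]; abel
  rw [hψ1, hψ0, hgs, hns, hxs] at h01
  have hLne : L i ≠ 0 := ne_of_gt hLi
  have : f (x - (L i)⁻¹ • p) ≤ f x - (L i)⁻¹ * ‖p‖^2 + L i / 2 * ((L i)⁻¹ ^ 2 * ‖p‖ ^ 2) := by
    linarith
  calc f (x - (L i)⁻¹ • p) ≤ f x - (L i)⁻¹ * ‖p‖^2 + L i / 2 * ((L i)⁻¹ ^ 2 * ‖p‖ ^ 2) := this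
    _ = f x - (2 * L i)⁻¹ * ‖p‖ ^ 2 := by field_simp; ring

/-- For the 1-random coordinate descent method with uniform block
selection applied to a smooth `f` (`h = 0`) with block-Lipschitz gradients
(iteration `x^{k+1} = x^k − (1/L_{i_k}) U_{i_k} ∇_{i_k} f(x^k)`, iterates encoded along
every realization `w` of the i.i.d. uniform indices), the expected squared dual gradient
norms `(‖∇f(x^l)‖*_L)² = ∑ i L_i⁻¹ ‖∇_i f(x^l)‖²` satisfy
`min_{0 ≤ l ≤ k} E[(‖∇f(x^l)‖*_L)²] ≤ 2N (f(x⁰) − f*)/(k+1)` with `f* = inf f`. -/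
theorem stmt7 {n N : ℕ} (hN : 0 < N) (blk : Fin n → Fin N)
    (L : Fin N → ℝ) (hL : ∀ i, 0 < L i)
    (f : En n → ℝ) (g : En n → En n) (hg : ∀ x, HasGradientAt f (g x) x)
    (hlip : ∀ (i : Fin N) (x s : En n), (∀ j, blk j ≠ i → s j = 0) →
      ‖blockProj blk i (g (x + s)) - blockProj blk i (g x)‖ ≤ L i * ‖s‖)
    (fstar : ℝ) (hfstar : IsGLB (Set.range f) fstar)
    (x0 : En n) (X : (k : ℕ) → (Fin k → Fin N) → En n)
    (hX0 : ∀ w, X 0 w = x0)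
    (hXs : ∀ k (w : Fin (k + 1) → Fin N),
      X (k + 1) w = X k (fun t => w t.castSucc) -
        (L (w (Fin.last k)))⁻¹ •
          blockProj blk (w (Fin.last k)) (g (X k (fun t => w t.castSucc))))
    (k : ℕ) :
    ∃ l ≤ k, ((N : ℝ) ^ l)⁻¹ *
        (∑ w : Fin l → Fin N, ∑ i, (L i)⁻¹ * ‖blockProj blk i (g (X l w))‖ ^ 2) ≤
      2 * N * (f x0 - fstar) / (k + 1) := by
  classical
  have hNR : (0:ℝ) < N := by exact_mod_cast hN
  set F : ℕ → ℝ := fun l => ((N:ℝ)^l)⁻¹ * ∑ w : Fin l → Fin N, f (X l w) with hF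
  set G : ℕ → ℝ := fun l => ((N:ℝ)^l)⁻¹ *
    ∑ w : Fin l → Fin N, ∑ i, (L i)⁻¹ * ‖blockProj blk i (g (X l w))‖ ^ 2 with hG
  have hstep : ∀ l, F (l+1) + (2*(N:ℝ))⁻¹ * G l ≤ F l := by
    intro l
    have hsum : ∑ w : Fin (l+1) → Fin N, f (X (l+1) w)
        = ∑ p : (Fin l → Fin N) × Fin N,
            f (X l p.1 - (L p.2)⁻¹ • blockProj blk p.2 (g (X l p.1))) := by
      refine (Fintype.sum_equiv
        ⟨fun p => Fin.snoc p.1 p.2, fun w => (Fin.init w, w (Fin.last l)),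
          fun p => by simp, fun w => Fin.snoc_init_self w⟩ _ _ ?_).symm
      intro p
      simp only [Equiv.coe_fn_mk]
      rw [hXs l (Fin.snoc p.1 p.2)]
      simp [Fin.snoc_castSucc, Fin.snoc_last]
    have hb : ∑ w : Fin (l+1) → Fin N, f (X (l+1) w)
        ≤ (N:ℝ) * (∑ w : Fin l → Fin N, f (X l w))
          - 2⁻¹ * ∑ w : Fin l → Fin N, ∑ i, (L i)⁻¹ * ‖blockProj blk i (g (X l w))‖ ^ 2 := by
      rw [hsum, Fintype.sum_prod_type]
      have h1 : ∀ w : Fin l → Fin N,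
          ∑ i, f (X l w - (L i)⁻¹ • blockProj blk i (g (X l w)))
          ≤ (N:ℝ) * f (X l w) - 2⁻¹ * ∑ i, (L i)⁻¹ * ‖blockProj blk i (g (X l w))‖ ^ 2 := by
        intro w
        have : ∑ i, f (X l w - (L i)⁻¹ • blockProj blk i (g (X l w)))
            ≤ ∑ i : Fin N, (f (X l w) - (2 * L i)⁻¹ * ‖blockProj blk i (g (X l w))‖ ^ 2) :=
          Finset.sum_le_sum fun i _ => descent blk hL hg hlip i (X l w)
        refine this.trans (le_of_eq ?_)
        rw [Finset.sum_sub_distrib, Finset.sum_const, Finset.card_univ, Fintype.card_fin,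
          Finset.mul_sum]
        congr 1
        · simp [mul_comm]
        · exact Finset.sum_congr rfl fun i _ => by rw [mul_inv]; ring
      calc ∑ w : Fin l → Fin N, ∑ i, f (X l w - (L i)⁻¹ • blockProj blk i (g (X l w)))
          ≤ ∑ w : Fin l → Fin N,
            ((N:ℝ) * f (X l w) - 2⁻¹ * ∑ i, (L i)⁻¹ * ‖blockProj blk i (g (X l w))‖ ^ 2) :=
            Finset.sum_le_sum fun w _ => h1 w
        _ = _ := by rw [Finset.sum_sub_distrib, ← Finset.mul_sum, ← Finset.mul_sum]
    have hpow : ((N:ℝ)^(l+1))⁻¹ = (N:ℝ)⁻¹ * ((N:ℝ)^l)⁻¹ := by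
      rw [pow_succ, mul_inv]; ring
    have hposl : (0:ℝ) < ((N:ℝ)^(l+1))⁻¹ := by positivity
    have := mul_le_mul_of_nonneg_left hb (le_of_lt hposl)
    calc F (l+1) + (2*(N:ℝ))⁻¹ * G l
        = ((N:ℝ)^(l+1))⁻¹ * (∑ w : Fin (l+1) → Fin N, f (X (l+1) w))
          + (2*(N:ℝ))⁻¹ * G l := rfl
      _ ≤ ((N:ℝ)^(l+1))⁻¹ * ((N:ℝ) * (∑ w : Fin l → Fin N, f (X l w))
          - 2⁻¹ * ∑ w : Fin l → Fin N, ∑ i, (L i)⁻¹ * ‖blockProj blk i (g (X l w))‖ ^ 2)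
          + (2*(N:ℝ))⁻¹ * G l := by linarith
      _ = F l := by
          rw [hF, hG, hpow]
          have hNne : (N:ℝ) ≠ 0 := ne_of_gt hNR
          field_simp
          ring
  have hfb : ∀ y, fstar ≤ f y := fun y => hfstar.1 (Set.mem_range_self y)
  have hcard : ∀ l : ℕ, Fintype.card (Fin l → Fin N) = N ^ l := by
    intro l; simp [Fintype.card_fun]
  have hFlb : ∀ l, fstar ≤ F l := by
    intro l
    have h1 : ((N:ℝ)^l) * fstar ≤ ∑ w : Fin l → Fin N, f (X l w) := by
      calc ((N:ℝ)^l) * fstar = ∑ _w : Fin l → Fin N, fstar := by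
            rw [Finset.sum_const, Finset.card_univ, hcard, nsmul_eq_mul]
            push_cast
            ring
        _ ≤ _ := Finset.sum_le_sum fun w _ => hfb _
    have h2 : ((N:ℝ)^l)⁻¹ * (((N:ℝ)^l) * fstar) ≤
        ((N:ℝ)^l)⁻¹ * ∑ w : Fin l → Fin N, f (X l w) :=
      mul_le_mul_of_nonneg_left h1 (by positivity)
    have h3 : ((N:ℝ)^l)⁻¹ * (((N:ℝ)^l) * fstar) = fstar := by
      field_simp
    show fstar ≤ ((N:ℝ)^l)⁻¹ * ∑ w : Fin l → Fin N, f (X l w)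
    linarith
  have hF0 : F 0 = f x0 := by
    simp [hF, hX0]
  have htel : ∀ m : ℕ, F m + ∑ l ∈ Finset.range m, (2*(N:ℝ))⁻¹ * G l ≤ F 0 := by
    intro m
    induction m with
    | zero => simp
    | succ m ih =>
        rw [Finset.sum_range_succ]
        have := hstep m
        linarith
  have hsumG : ∑ l ∈ Finset.range (k+1), G l ≤ 2 * N * (f x0 - fstar) := by
    have h1 := htel (k+1)
    have h2 := hFlb (k+1)
    rw [← Finset.mul_sum] at h1
    have h3 : (2*(N:ℝ))⁻¹ * ∑ l ∈ Finset.range (k+1), G l ≤ f x0 - fstar := by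
      rw [hF0] at h1; linarith
    have h4 : (0:ℝ) < 2 * N := by positivity
    calc ∑ l ∈ Finset.range (k+1), G l
        = (2*(N:ℝ)) * ((2*(N:ℝ))⁻¹ * ∑ l ∈ Finset.range (k+1), G l) := by
          field_simp
      _ ≤ (2*(N:ℝ)) * (f x0 - fstar) := by
          exact mul_le_mul_of_nonneg_left h3 (le_of_lt h4)
      _ = 2 * N * (f x0 - fstar) := by ring
  obtain ⟨l, hl, hmin⟩ := Finset.exists_min_image (Finset.range (k+1)) G ⟨0, by simp⟩
  refine ⟨l, Nat.lt_succ_iff.mp (Finset.mem_range.mp hl), ?_⟩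
  have hcardsum : ((k:ℝ)+1) * G l ≤ ∑ l' ∈ Finset.range (k+1), G l' := by
    calc ((k:ℝ)+1) * G l = ∑ _l' ∈ Finset.range (k+1), G l := by
          rw [Finset.sum_const, Finset.card_range, nsmul_eq_mul]; push_cast; ring
      _ ≤ _ := Finset.sum_le_sum fun l' hl' => hmin l' hl'
  have hfin : G l ≤ 2 * N * (f x0 - fstar) / (k + 1) := by
    rw [le_div_iff₀ (by positivity : (0:ℝ) < (k:ℝ)+1)]
    calc G l * ((k:ℝ)+1) = ((k:ℝ)+1) * G l := by ring
      _ ≤ _ := hcardsum.trans hsumG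
  exact hfin
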